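/- Assume in addition that 𝔨 is simple, that 𝔭₁ ≠ 0 is irreducible as an ad(𝔨)-module (its only 𝔨-invariant subspaces are 0 and 𝔭₁), and that 𝔭₁ is not isomorphic, as an ad(𝔨)-module, to 𝔨 with the adjoint action. Let A : 𝔪 → 𝔪 be an ℝ-linear map that is ad(𝔥)-equivariant (A(⁅H, X⁆) = ⁅H, A(X)⁆ for H ∈ 𝔥, X ∈ 𝔪), B-symmetric (B(A(X), Y) = B(X, A(Y)) for X, Y ∈ 𝔪), and positive definite (−B(A(X), X) > 0 for all nonzero X ∈ 𝔪). If for every X ∈ 𝔪 there exists Z ∈ 𝔥 with ⁅Z + X, A(X)⁆ = 0, then A is diagonal with respect to the decomposition 𝔪 = 𝔪₀ ⊕ 𝔪₁ ⊕ 𝔪₂: there exist reals c₀, x, y > 0 with A = c₀·id on 𝔪₀, A = x·id on 𝔪₁ and A = y·id on 𝔪₂. -/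

import Mathlib

lemma exists_eigen_aux {E : Type*} [AddCommGroup E] [Module ℝ E] [Module.Finite ℝ E]
    (hE : ∃ v : E, v ≠ 0)
    (b : E → E → ℝ)
    (hadd : ∀ x y z, b (x + y) z = b x z + b y z)
    (hsmul : ∀ (r : ℝ) x y, b (r • x) y = r * b x y)
    (hbs : ∀ x y, b x y = b y x)
    (hbp : ∀ x, x ≠ 0 → 0 < b x x)
    (T : E →ₗ[ℝ] E) (hTs : ∀ x y, b (T x) y = b x (T y)) :
    ∃ (c : ℝ) (v : E), v ≠ 0 ∧ T v = c • v := by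
  letI core : InnerProductSpace.Core ℝ E :=
    { inner := b
      conj_inner_symm := fun x y => by simpa using hbs y x
      re_inner_nonneg := fun x => by
        rcases eq_or_ne x 0 with rfl | hx
        · have : b (0 : E) 0 = 0 := by
            have := hsmul 0 0 0
            simpa using this
          simp [this]
        · exact le_of_lt (by simpa using hbp x hx)
      add_left := fun x y z => hadd x y z
      smul_left := fun x y r => by simpa using hsmul r x y
      definite := fun x hx => by
        by_contra h
        exact absurd hx (ne_of_gt (hbp x h)) }
  letI : NormedAddCommGroup E := core.toNormedAddCommGroup
  letI : InnerProductSpace ℝ E := InnerProductSpace.ofCore core.toCore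
  haveI : Nontrivial E := by
    obtain ⟨v, hv⟩ := hE
    exact ⟨v, 0, hv⟩
  haveI : FiniteDimensional ℝ E := inferInstance
  have hsymm : T.IsSymmetric := fun x y => by
    show b (T x) y = b x (T y)
    exact hTs x y
  have h := hsymm.hasEigenvalue_iSup_of_finiteDimensional
  obtain ⟨v, hv⟩ := h.exists_hasEigenvector
  exact ⟨_, v, hv.2, hv.apply_eq_smul⟩

/-- Let `g1` be a finite-dimensional real semisimple Lie algebra with
negative definite Killing form, `k` a nonzero proper subalgebra which is simple, and
`p1 ≠ 0` its orthogonal complement, irreducible as an `ad(k)`-module and not isomorphic to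
the adjoint module `k`.  In `g = g1 ⊕ g1` (brackets taken componentwise and
`B = B₁ ⊕ B₁`), with `h` the diagonal of `k`, `m0 = {(Z, −Z)}`, `m1 = p1 × 0`,
`m2 = 0 × p1`, `m = m0 ⊕ m1 ⊕ m2`: if `A : m → m` is `ad(h)`-equivariant, `B`-symmetric
and positive definite, and for every `X ∈ m` there is `Z ∈ h` with `⁅Z + X, A X⁆ = 0`,
then `A` is diagonal: `A = c₀·id` on `m0`, `x·id` on `m1`, `y·id` on `m2` for some
positive reals `c₀, x, y`. -/
theorem statement12
    {g1 : Type*} [LieRing g1] [LieAlgebra ℝ g1] [Module.Finite ℝ g1]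
    [LieAlgebra.IsSemisimple ℝ g1]
    (hB1neg : ∀ a : g1, a ≠ 0 → killingForm ℝ g1 a a < 0)
    (k : LieSubalgebra ℝ g1) (hkne : k ≠ ⊥) (hkprop : k ≠ ⊤)
    (hksimple : LieAlgebra.IsSimple ℝ k)
    (p1 : Submodule ℝ g1)
    (hp1 : ∀ P : g1, P ∈ p1 ↔ ∀ Z ∈ k, killingForm ℝ g1 P Z = 0)
    (hp1ne : p1 ≠ ⊥)
    (hp1irr : ∀ W : Submodule ℝ g1, W ≤ p1 →
      (∀ Z ∈ k, ∀ P ∈ W, ⁅Z, P⁆ ∈ W) → W = ⊥ ∨ W = p1)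
    (hnotiso : ¬ ∃ θ : g1 →ₗ[ℝ] g1, Set.BijOn θ (k : Set g1) (p1 : Set g1) ∧
      ∀ Z ∈ k, ∀ W ∈ k, θ ⁅Z, W⁆ = ⁅Z, θ W⁆)
    (m0 m1 m2 m : Submodule ℝ (g1 × g1))
    (hm0 : ∀ p : g1 × g1, p ∈ m0 ↔ ∃ Z ∈ k, p = (Z, -Z))
    (hm1 : ∀ p : g1 × g1, p ∈ m1 ↔ p.1 ∈ p1 ∧ p.2 = 0)
    (hm2 : ∀ p : g1 × g1, p ∈ m2 ↔ p.1 = 0 ∧ p.2 ∈ p1)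
    (hm : m = m0 ⊔ m1 ⊔ m2)
    (A : (g1 × g1) →ₗ[ℝ] g1 × g1)
    (hAm : ∀ X ∈ m, A X ∈ m)
    (hAequiv : ∀ Z ∈ k, ∀ X ∈ m,
      A (⁅Z, X.1⁆, ⁅Z, X.2⁆) = (⁅Z, (A X).1⁆, ⁅Z, (A X).2⁆))
    (hAsymm : ∀ X ∈ m, ∀ Y ∈ m,
      killingForm ℝ g1 (A X).1 Y.1 + killingForm ℝ g1 (A X).2 Y.2 =
        killingForm ℝ g1 X.1 (A Y).1 + killingForm ℝ g1 X.2 (A Y).2)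
    (hApos : ∀ X ∈ m, X ≠ 0 →
      0 < -(killingForm ℝ g1 (A X).1 X.1 + killingForm ℝ g1 (A X).2 X.2))
    (hGO : ∀ X ∈ m, ∃ Z ∈ k, ⁅Z + X.1, (A X).1⁆ = 0 ∧ ⁅Z + X.2, (A X).2⁆ = 0) :
    ∃ c0 x y : ℝ, 0 < c0 ∧ 0 < x ∧ 0 < y ∧
      (∀ X ∈ m0, A X = c0 • X) ∧ (∀ X ∈ m1, A X = x • X) ∧ (∀ X ∈ m2, A X = y • X) := by
  classical
  -- basic properties of the Killing form
  have Bsymm : ∀ x y : g1, killingForm ℝ g1 x y = killingForm ℝ g1 y x :=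
    fun x y => LieModule.traceForm_comm ℝ g1 g1 x y
  have Binv : ∀ x y z : g1, killingForm ℝ g1 ⁅x, y⁆ z = killingForm ℝ g1 x ⁅y, z⁆ :=
    fun x y z => LieModule.traceForm_apply_lie_apply ℝ g1 g1 x y z
  have Bzero : ∀ x : g1, killingForm ℝ g1 x x = 0 → x = 0 := by
    intro x hx
    by_contra h
    exact absurd hx (ne_of_lt (hB1neg x h))
  -- [k, p1] ⊆ p1
  have hkp1 : ∀ Z ∈ k, ∀ P ∈ p1, ⁅Z, P⁆ ∈ p1 := by
    intro Z hZ P hP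
    rw [hp1]
    intro W hW
    have : ⁅Z, P⁆ = -⁅P, Z⁆ := by rw [← lie_skew]
    rw [this, map_neg, LinearMap.neg_apply, Binv P Z W]
    have : killingForm ℝ g1 P ⁅Z, W⁆ = 0 := by
      rw [Bsymm]
      exact Bsymm _ _ ▸ ((hp1 P).1 hP _ (k.lie_mem hZ hW))
    rw [this, neg_zero]
  -- disjointness of k and p1
  have hdisj : ∀ x : g1, x ∈ k → x ∈ p1 → x = 0 := by
    intro x hxk hxp
    exact Bzero x ((hp1 x).1 hxp x hxk)
  -- complementarity
  have hcompl : IsCompl (k.toSubmodule) p1 := by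
    have hrefl : (killingForm ℝ g1).IsRefl := by
      intro x y h
      rw [Bsymm]; exact h
    have hp1eq : p1 = (killingForm ℝ g1).orthogonal k.toSubmodule := by
      ext x
      rw [hp1, LinearMap.BilinForm.mem_orthogonal_iff]
      constructor
      · intro h n hn
        have := h n hn
        rw [Bsymm]
        exact this
      · intro h Z hZ
        have := h Z hZ
        rw [Bsymm]; exact this
    have hnd : ((killingForm ℝ g1).restrict k.toSubmodule).Nondegenerate := by
      constructor <;> intro x hx <;>
      · have := hx x
        rw [LinearMap.BilinForm.restrict_apply] at this
        have hx0 : (x : g1) = 0 := by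
          by_contra h
          exact absurd this (ne_of_lt (hB1neg _ h))
        exact Subtype.ext hx0
    rw [hp1eq]
    exact LinearMap.BilinForm.isCompl_orthogonal_of_restrict_nondegenerate hrefl hnd
  -- the projection onto k along p1
  set prK : g1 →ₗ[ℝ] g1 :=
    (k.toSubmodule).subtype ∘ₗ (k.toSubmodule).projectionOnto p1 hcompl with hprK_def
  have prK_memk : ∀ x : g1, prK x ∈ k := fun x =>
    ((k.toSubmodule).projectionOnto p1 hcompl x).2
  have prK_left : ∀ x ∈ k, prK x = x := by
    intro x hx
    have := Submodule.projectionOnto_apply_left hcompl ⟨x, hx⟩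
    simp only [hprK_def, LinearMap.comp_apply, Submodule.subtype_apply]
    rw [this]
  have prK_right : ∀ x ∈ p1, prK x = 0 := by
    intro x hx
    have := Submodule.projectionOnto_apply_of_mem_right hcompl hx
    simp only [hprK_def, LinearMap.comp_apply, Submodule.subtype_apply]
    rw [this]; rfl
  have prK_uniq : ∀ z p x : g1, z ∈ k → p ∈ p1 → x = z + p → prK x = z := by
    intro z p x hz hp hx
    rw [hx, map_add, prK_left z hz, prK_right p hp, add_zero]
  have prP_mem : ∀ x : g1, x - prK x ∈ p1 := by
    intro x
    have hx : x ∈ k.toSubmodule ⊔ p1 := by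
      rw [hcompl.sup_eq_top]; trivial
    obtain ⟨z, hz, p, hp, rfl⟩ := Submodule.mem_sup.1 hx
    have : prK (z + p) = z := prK_uniq z p _ hz hp rfl
    rw [this, add_sub_cancel_left]
    exact hp
  -- membership in m
  have hm0m : ∀ Z ∈ k, (Z, -Z) ∈ m0 := by
    intro Z hZ; rw [hm0]; exact ⟨Z, hZ, rfl⟩
  have hm1m : ∀ P ∈ p1, ((P, 0) : g1 × g1) ∈ m1 := by
    intro P hP; rw [hm1]; exact ⟨hP, rfl⟩
  have hm2m : ∀ Q ∈ p1, ((0, Q) : g1 × g1) ∈ m2 := by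
    intro Q hQ; rw [hm2]; exact ⟨rfl, hQ⟩
  have hsub0 : m0 ≤ m := by rw [hm]; exact le_sup_of_le_left le_sup_left
  have hsub1 : m1 ≤ m := by rw [hm]; exact le_sup_of_le_left le_sup_right
  have hsub2 : m2 ≤ m := by rw [hm]; exact le_sup_right
  have hmem : ∀ X : g1 × g1, X ∈ m →
      ∃ Z ∈ k, ∃ P ∈ p1, ∃ Q ∈ p1, X = (Z + P, -Z + Q) := by
    intro X hX
    rw [hm] at hX
    obtain ⟨Y, hY, X2, hX2, rfl⟩ := Submodule.mem_sup.1 hX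
    obtain ⟨X0, hX0, X1, hX1, rfl⟩ := Submodule.mem_sup.1 hY
    obtain ⟨Z, hZ, rfl⟩ := (hm0 X0).1 hX0
    obtain ⟨hP, h2⟩ := (hm1 X1).1 hX1
    obtain ⟨h1, hQ⟩ := (hm2 X2).1 hX2
    refine ⟨Z, hZ, X1.1, hP, X2.2, hQ, ?_⟩
    ext
    · simp [h1]
    · simp [h2]
  -- projection commutes with ad of k
  have hprK_lie : ∀ W ∈ k, ∀ x : g1, prK ⁅W, x⁆ = ⁅W, prK x⁆ := by
    intro W hW x
    have h1 : ⁅W, x⁆ = ⁅W, prK x⁆ + ⁅W, x - prK x⁆ := by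
      rw [← lie_add]; congr 1; abel
    exact prK_uniq _ _ _ (k.lie_mem hW (prK_memk x)) (hkp1 W hW _ (prP_mem x)) h1
  -- Schur: any equivariant linear map sending k into p1 vanishes on k
  have schurA : ∀ ξ : g1 →ₗ[ℝ] g1, (∀ Z ∈ k, ξ Z ∈ p1) →
      (∀ W ∈ k, ∀ Z ∈ k, ξ ⁅W, Z⁆ = ⁅W, ξ Z⁆) → ∀ Z ∈ k, ξ Z = 0 := by
    intro ξ hmap hequiv
    let I : LieIdeal ℝ k :=
      { carrier := {z : k | ξ z = 0}
        add_mem' := by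
          intro a b ha hb
          simp only [Set.mem_setOf_eq] at *
          rw [Submodule.coe_add, map_add, ha, hb, add_zero]
        zero_mem' := by simp
        smul_mem' := by
          intro c a ha
          simp only [Set.mem_setOf_eq] at *
          rw [show ((c • a : k) : g1) = c • (a : g1) from rfl, map_smul, ha, smul_zero]
        lie_mem := by
          intro w z hz
          simp only [Set.mem_setOf_eq] at *
          rw [LieSubalgebra.coe_bracket, hequiv w w.2 z z.2, hz, lie_zero] }
    rcases hksimple.eq_bot_or_eq_top I with hI | hI
    · have hinj : ∀ z : g1, z ∈ k → ξ z = 0 → z = 0 := by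
        intro z hz h0
        have : (⟨z, hz⟩ : k) ∈ I := h0
        rw [hI] at this
        exact congrArg Subtype.val (this : (⟨z, hz⟩ : k) = 0)
      set Wim : Submodule ℝ g1 := Submodule.map ξ k.toSubmodule with hWim_def
      have hWle : Wim ≤ p1 := by
        rintro _ ⟨x, hx, rfl⟩
        exact hmap x hx
      have hWinv : ∀ Z ∈ k, ∀ P ∈ Wim, ⁅Z, P⁆ ∈ Wim := by
        rintro Z hZ _ ⟨x, hx, rfl⟩
        exact ⟨⁅Z, x⁆, k.lie_mem hZ hx, hequiv Z hZ x hx⟩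
      rcases hp1irr Wim hWle hWinv with hW | hW
      · intro Z hZ
        have : ξ Z ∈ Wim := ⟨Z, hZ, rfl⟩
        rw [hW] at this
        exact this
      · exfalso
        apply hnotiso
        refine ⟨ξ ∘ₗ prK, ⟨?_, ?_, ?_⟩, ?_⟩
        · intro x hx
          simp only [LinearMap.comp_apply, prK_left x hx]
          exact hmap x hx
        · intro x hx y hy hxy
          simp only [LinearMap.comp_apply, prK_left x hx, prK_left y hy] at hxy
          have h0 : ξ (x - y) = 0 := by rw [map_sub, hxy, sub_self]
          exact sub_eq_zero.1 (hinj (x - y) (k.sub_mem hx hy) h0)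
        · intro P hP
          have : P ∈ Wim := by rw [hW]; exact hP
          obtain ⟨x, hx, rfl⟩ := this
          exact ⟨x, hx, by simp only [LinearMap.comp_apply, prK_left x hx]⟩
        · intro Z hZ W hW
          simp only [LinearMap.comp_apply, prK_left _ (k.lie_mem hZ hW), prK_left W hW]
          exact hequiv Z hZ W hW
    · intro Z hZ
      have : (⟨Z, hZ⟩ : k) ∈ I := by rw [hI]; trivial
      exact this
    -- the operator on the diagonal copy of k
  set D1 : g1 →ₗ[ℝ] g1 :=
    (LinearMap.fst ℝ g1 g1) ∘ₗ A ∘ₗ (LinearMap.prod LinearMap.id (-LinearMap.id)) with hD1_def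
  set D2 : g1 →ₗ[ℝ] g1 :=
    (LinearMap.snd ℝ g1 g1) ∘ₗ A ∘ₗ (LinearMap.prod LinearMap.id (-LinearMap.id)) with hD2_def
  have hD1a : ∀ Z : g1, D1 Z = (A (Z, -Z)).1 := fun Z => rfl
  have hD2a : ∀ Z : g1, D2 Z = (A (Z, -Z)).2 := fun Z => rfl
  have hDe : ∀ W ∈ k, ∀ Z ∈ k, D1 ⁅W, Z⁆ = ⁅W, D1 Z⁆ ∧ D2 ⁅W, Z⁆ = ⁅W, D2 Z⁆ := by
    intro W hW Z hZ
    have h := hAequiv W hW (Z, -Z) (hsub0 (hm0m Z hZ))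
    have h' : A (⁅W, Z⁆, -⁅W, Z⁆) = (⁅W, (A (Z, -Z)).1⁆, ⁅W, (A (Z, -Z)).2⁆) := by
      rw [← h]; congr 1; simp
    constructor
    · rw [hD1a ⁅W, Z⁆, h', hD1a Z]
    · rw [hD2a ⁅W, Z⁆, h', hD2a Z]
  set f : g1 →ₗ[ℝ] g1 := prK ∘ₗ D1 with hf_def
  set u : g1 →ₗ[ℝ] g1 := D1 - prK ∘ₗ D1 with hu_def
  set v : g1 →ₗ[ℝ] g1 := D2 - prK ∘ₗ D2 with hv_def
  have hfa : ∀ Z : g1, f Z = prK (D1 Z) := fun Z => rfl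
  have hua : ∀ Z : g1, u Z = D1 Z - prK (D1 Z) := fun Z => rfl
  have hva : ∀ Z : g1, v Z = D2 Z - prK (D2 Z) := fun Z => rfl
  have hfk : ∀ Z : g1, f Z ∈ k := fun Z => prK_memk _
  have hu_mem : ∀ Z ∈ k, u Z ∈ p1 := by
    intro Z hZ
    obtain ⟨Z', hZ', P', hP', Q', hQ', heq⟩ := hmem _ (hAm _ (hsub0 (hm0m Z hZ)))
    have h1 : D1 Z = Z' + P' := by rw [hD1a]; exact congrArg Prod.fst heq
    have h2 : prK (D1 Z) = Z' := prK_uniq _ _ _ hZ' hP' h1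
    rw [hua, h2, h1, add_sub_cancel_left]
    exact hP'
  have hv_mem : ∀ Z ∈ k, v Z ∈ p1 := by
    intro Z hZ
    obtain ⟨Z', hZ', P', hP', Q', hQ', heq⟩ := hmem _ (hAm _ (hsub0 (hm0m Z hZ)))
    have h1 : D2 Z = -Z' + Q' := by rw [hD2a]; exact congrArg Prod.snd heq
    have h2 : prK (D2 Z) = -Z' := prK_uniq _ _ _ (k.neg_mem hZ') hQ' h1
    rw [hva, h2, h1]
    have he : -Z' + Q' - -Z' = Q' := by abel
    rw [he]
    exact hQ'
  have hue : ∀ W ∈ k, ∀ Z ∈ k, u ⁅W, Z⁆ = ⁅W, u Z⁆ := by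
    intro W hW Z hZ
    rw [hua, hua, (hDe W hW Z hZ).1, hprK_lie W hW, ← lie_sub]
  have hve : ∀ W ∈ k, ∀ Z ∈ k, v ⁅W, Z⁆ = ⁅W, v Z⁆ := by
    intro W hW Z hZ
    rw [hva, hva, (hDe W hW Z hZ).2, hprK_lie W hW, ← lie_sub]
  have hu0 : ∀ Z ∈ k, u Z = 0 := schurA u hu_mem hue
  have hv0 : ∀ Z ∈ k, v Z = 0 := schurA v hv_mem hve
  -- A acts on m0 via f
  have hAZ : ∀ Z ∈ k, A (Z, -Z) = (f Z, -(f Z)) := by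
    intro Z hZ
    obtain ⟨Z', hZ', P', hP', Q', hQ', heq⟩ := hmem _ (hAm _ (hsub0 (hm0m Z hZ)))
    have h1 : D1 Z = Z' + P' := by rw [hD1a]; exact congrArg Prod.fst heq
    have h2 : D2 Z = -Z' + Q' := by rw [hD2a]; exact congrArg Prod.snd heq
    have hpr1 : prK (D1 Z) = Z' := prK_uniq _ _ _ hZ' hP' h1
    have hpr2 : prK (D2 Z) = -Z' := prK_uniq _ _ _ (k.neg_mem hZ') hQ' h2
    have hu' := hu0 Z hZ
    rw [hua] at hu'
    have hv' := hv0 Z hZ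
    rw [hva] at hv'
    have hD1' : D1 Z = Z' := by rw [sub_eq_zero] at hu'; rw [hu', hpr1]
    have hD2' : D2 Z = -Z' := by rw [sub_eq_zero] at hv'; rw [hv', hpr2]
    have hfZ : f Z = Z' := by rw [hfa, hpr1]
    have : A (Z, -Z) = (D1 Z, D2 Z) := by rw [hD1a, hD2a]
    rw [this, hD1', hD2', hfZ]
  have hfe : ∀ W ∈ k, ∀ Z ∈ k, f ⁅W, Z⁆ = ⁅W, f Z⁆ := by
    intro W hW Z hZ
    rw [hfa, hfa, (hDe W hW Z hZ).1, hprK_lie W hW]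
  have hfsymm : ∀ Z ∈ k, ∀ W ∈ k,
      killingForm ℝ g1 (f Z) W = killingForm ℝ g1 Z (f W) := by
    intro Z hZ W hW
    have h := hAsymm (Z, -Z) (hsub0 (hm0m Z hZ)) (W, -W) (hsub0 (hm0m W hW))
    rw [hAZ Z hZ, hAZ W hW] at h
    simp only [map_neg, LinearMap.neg_apply] at h
    linarith
  -- eigenvalue of f
  have hknz : ∃ x : g1, x ∈ k ∧ x ≠ 0 := by
    by_contra h
    push_neg at h
    exact hkne (k.eq_bot_iff.2 fun x hx => h x hx)
  have hfrestrict : ∀ x ∈ k.toSubmodule, f x ∈ k.toSubmodule := fun x _ => hfk x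
  obtain ⟨c0, vc, hvc0, hvceq⟩ :=
    exists_eigen_aux (E := k.toSubmodule)
      (by obtain ⟨x, hx, hx0⟩ := hknz
          exact ⟨⟨x, hx⟩, fun h => hx0 (congrArg Subtype.val h)⟩)
      (fun x y => -(killingForm ℝ g1 x y))
      (by intro x y z; simp only [Submodule.coe_add, map_add, LinearMap.add_apply]; ring)
      (by intro r x y
          simp only [SetLike.val_smul, map_smul, LinearMap.smul_apply, smul_eq_mul]; ring)
      (by intro x y; exact neg_inj.2 (Bsymm (x : g1) (y : g1)))
      (by intro x hx
          have hxne : (x : g1) ≠ 0 := fun h => hx (Subtype.ext h)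
          exact neg_pos.2 (hB1neg _ hxne))
      (f.restrict hfrestrict)
      (by intro x y
          exact neg_inj.2 (hfsymm _ x.2 _ y.2))
  have hfvc : f (vc : g1) = c0 • (vc : g1) := by
    have := congrArg Subtype.val hvceq
    exact this
  have hvcne : (vc : g1) ≠ 0 := fun h => hvc0 (Subtype.ext h)
  -- the eigenspace is an ideal of k, hence everything
  have hfc0 : ∀ Z ∈ k, f Z = c0 • Z := by
    let I : LieIdeal ℝ k :=
      { carrier := {z : k | f z = c0 • (z : g1)}
        add_mem' := by
          intro a b ha hb
          simp only [Set.mem_setOf_eq] at *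
          rw [Submodule.coe_add, map_add, ha, hb, smul_add]
        zero_mem' := by simp
        smul_mem' := by
          intro c a ha
          simp only [Set.mem_setOf_eq] at *
          rw [show ((c • a : k) : g1) = c • (a : g1) from rfl, map_smul, ha, smul_comm]
        lie_mem := by
          intro w z hz
          simp only [Set.mem_setOf_eq] at *
          rw [LieSubalgebra.coe_bracket, hfe w w.2 z z.2, hz, lie_smul] }
    rcases hksimple.eq_bot_or_eq_top I with hI | hI
    · exfalso
      have hmem' : (⟨(vc : g1), vc.2⟩ : k) ∈ I := hfvc
      rw [hI] at hmem'
      exact hvcne (congrArg Subtype.val (hmem' : (⟨(vc : g1), vc.2⟩ : k) = 0))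
    · intro Z hZ
      have : (⟨Z, hZ⟩ : k) ∈ I := by rw [hI]; trivial
      exact this
  have hc0pos : 0 < c0 := by
    obtain ⟨Z0, hZ0, hZ0ne⟩ := hknz
    have hXne : ((Z0, -Z0) : g1 × g1) ≠ 0 := fun h => hZ0ne (congrArg Prod.fst h)
    have h := hApos (Z0, -Z0) (hsub0 (hm0m Z0 hZ0)) hXne
    rw [hAZ Z0 hZ0, hfc0 Z0 hZ0] at h
    simp only [map_neg, map_smul, LinearMap.neg_apply, LinearMap.smul_apply,
      smul_eq_mul, neg_neg] at h
    have hB0 := hB1neg Z0 hZ0ne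
    nlinarith
  -- block operators on m1 ⊕ m2
  set T11 : g1 →ₗ[ℝ] g1 := (LinearMap.fst ℝ g1 g1) ∘ₗ A ∘ₗ (LinearMap.inl ℝ g1 g1) with hT11_def
  set T21 : g1 →ₗ[ℝ] g1 := (LinearMap.snd ℝ g1 g1) ∘ₗ A ∘ₗ (LinearMap.inl ℝ g1 g1) with hT21_def
  set T12 : g1 →ₗ[ℝ] g1 := (LinearMap.fst ℝ g1 g1) ∘ₗ A ∘ₗ (LinearMap.inr ℝ g1 g1) with hT12_def
  set T22 : g1 →ₗ[ℝ] g1 := (LinearMap.snd ℝ g1 g1) ∘ₗ A ∘ₗ (LinearMap.inr ℝ g1 g1) with hT22_def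
  have hT11a : ∀ P : g1, T11 P = (A (P, 0)).1 := fun P => rfl
  have hT21a : ∀ P : g1, T21 P = (A (P, 0)).2 := fun P => rfl
  have hT12a : ∀ Q : g1, T12 Q = (A (0, Q)).1 := fun Q => rfl
  have hT22a : ∀ Q : g1, T22 Q = (A (0, Q)).2 := fun Q => rfl
  have hBk0 : ∀ x : g1, x ∈ k → ∀ P ∈ p1, killingForm ℝ g1 x P = 0 := by
    intro x hx P hP
    rw [Bsymm]
    exact (hp1 P).1 hP x hx
  -- the blocks map p1 to p1
  have hblock1 : ∀ P ∈ p1, T11 P ∈ p1 ∧ T21 P ∈ p1 := by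
    intro P hP
    obtain ⟨Z', hZ', P', hP', Q', hQ', heq⟩ := hmem _ (hAm _ (hsub1 (hm1m P hP)))
    have h1 : (A (P, 0)).1 = Z' + P' := congrArg Prod.fst heq
    have h2 : (A (P, 0)).2 = -Z' + Q' := congrArg Prod.snd heq
    have hsy := hAsymm (Z', -Z') (hsub0 (hm0m Z' hZ')) (P, 0) (hsub1 (hm1m P hP))
    rw [hAZ Z' hZ'] at hsy
    simp only [h1, h2] at hsy
    have e1 : killingForm ℝ g1 (f Z') P = 0 := hBk0 _ (hfk Z') P hP
    have e2 : killingForm ℝ g1 Z' P' = 0 := hBk0 _ hZ' P' hP'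
    have e3 : killingForm ℝ g1 Z' Q' = 0 := hBk0 _ hZ' Q' hQ'
    simp only [map_neg, map_add, LinearMap.neg_apply, LinearMap.add_apply, map_zero,
      e1, e2, e3] at hsy
    have hZ'0 : killingForm ℝ g1 Z' Z' = 0 := by linarith
    have hZ'z : Z' = 0 := Bzero _ hZ'0
    constructor
    · rw [hT11a, h1, hZ'z, zero_add]; exact hP'
    · rw [hT21a, h2, hZ'z, neg_zero, zero_add]; exact hQ'
  have hblock2 : ∀ Q ∈ p1, T12 Q ∈ p1 ∧ T22 Q ∈ p1 := by
    intro Q hQ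
    obtain ⟨Z', hZ', P', hP', Q', hQ', heq⟩ := hmem _ (hAm _ (hsub2 (hm2m Q hQ)))
    have h1 : (A (0, Q)).1 = Z' + P' := congrArg Prod.fst heq
    have h2 : (A (0, Q)).2 = -Z' + Q' := congrArg Prod.snd heq
    have hsy := hAsymm (Z', -Z') (hsub0 (hm0m Z' hZ')) ((0 : g1), Q) (hsub2 (hm2m Q hQ))
    rw [hAZ Z' hZ'] at hsy
    simp only [h1, h2] at hsy
    have e1 : killingForm ℝ g1 (f Z') Q = 0 := hBk0 _ (hfk Z') Q hQ
    have e2 : killingForm ℝ g1 Z' P' = 0 := hBk0 _ hZ' P' hP'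
    have e3 : killingForm ℝ g1 Z' Q' = 0 := hBk0 _ hZ' Q' hQ'
    simp only [map_neg, map_add, LinearMap.neg_apply, LinearMap.add_apply, map_zero,
      e1, e2, e3] at hsy
    have hZ'0 : killingForm ℝ g1 Z' Z' = 0 := by linarith
    have hZ'z : Z' = 0 := Bzero _ hZ'0
    constructor
    · rw [hT12a, h1, hZ'z, zero_add]; exact hP'
    · rw [hT22a, h2, hZ'z, neg_zero, zero_add]; exact hQ'
  -- equivariance of the blocks
  have hTe1 : ∀ W ∈ k, ∀ P ∈ p1, T11 ⁅W, P⁆ = ⁅W, T11 P⁆ ∧ T21 ⁅W, P⁆ = ⁅W, T21 P⁆ := by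
    intro W hW P hP
    have h := hAequiv W hW (P, 0) (hsub1 (hm1m P hP))
    have h' : A (⁅W, P⁆, 0) = (⁅W, (A (P, 0)).1⁆, ⁅W, (A (P, 0)).2⁆) := by
      rw [← h]; congr 1; simp
    constructor
    · rw [hT11a, hT11a, h']
    · rw [hT21a, hT21a, h']
  have hTe2 : ∀ W ∈ k, ∀ Q ∈ p1, T12 ⁅W, Q⁆ = ⁅W, T12 Q⁆ ∧ T22 ⁅W, Q⁆ = ⁅W, T22 Q⁆ := by
    intro W hW Q hQ
    have h := hAequiv W hW ((0 : g1), Q) (hsub2 (hm2m Q hQ))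
    have h' : A (0, ⁅W, Q⁆) = (⁅W, (A (0, Q)).1⁆, ⁅W, (A (0, Q)).2⁆) := by
      rw [← h]; congr 1; simp
    constructor
    · rw [hT12a, hT12a, h']
    · rw [hT22a, hT22a, h']
  -- symmetry of the blocks
  have hT11sym : ∀ P ∈ p1, ∀ Q ∈ p1,
      killingForm ℝ g1 (T11 P) Q = killingForm ℝ g1 P (T11 Q) := by
    intro P hP Q hQ
    have h := hAsymm (P, 0) (hsub1 (hm1m P hP)) (Q, 0) (hsub1 (hm1m Q hQ))
    simp only [← hT11a, ← hT21a, map_zero, LinearMap.zero_apply] at h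
    simpa using h
  have hT22sym : ∀ P ∈ p1, ∀ Q ∈ p1,
      killingForm ℝ g1 (T22 P) Q = killingForm ℝ g1 P (T22 Q) := by
    intro P hP Q hQ
    have h := hAsymm ((0 : g1), P) (hsub2 (hm2m P hP)) ((0 : g1), Q) (hsub2 (hm2m Q hQ))
    simp only [← hT12a, ← hT22a, map_zero, LinearMap.zero_apply] at h
    simpa using h
  have hadj : ∀ P ∈ p1, ∀ Q ∈ p1,
      killingForm ℝ g1 (T21 P) Q = killingForm ℝ g1 P (T12 Q) := by
    intro P hP Q hQ
    have h := hAsymm (P, 0) (hsub1 (hm1m P hP)) ((0 : g1), Q) (hsub2 (hm2m Q hQ))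
    simp only [← hT11a, ← hT21a, ← hT12a, ← hT22a, map_zero, LinearMap.zero_apply] at h
    simpa using h
  -- nonzero element of p1
  have hp1nz : ∃ x : g1, x ∈ p1 ∧ x ≠ 0 := by
    by_contra h
    push_neg at h
    exact hp1ne ((Submodule.eq_bot_iff p1).2 fun x hx => h x hx)
  -- T11 and T22 are scalar on p1
  have hscalar : ∀ T : g1 →ₗ[ℝ] g1, (∀ P ∈ p1, T P ∈ p1) →
      (∀ W ∈ k, ∀ P ∈ p1, T ⁅W, P⁆ = ⁅W, T P⁆) →
      (∀ P ∈ p1, ∀ Q ∈ p1, killingForm ℝ g1 (T P) Q = killingForm ℝ g1 P (T Q)) →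
      ∃ t : ℝ, ∀ P ∈ p1, T P = t • P := by
    intro T hTm hTe hTs
    have hTrestrict : ∀ x ∈ p1, T x ∈ p1 := hTm
    obtain ⟨t, vt, hvt0, hvteq⟩ :=
      exists_eigen_aux (E := p1)
        (by obtain ⟨x, hx, hx0⟩ := hp1nz
            exact ⟨⟨x, hx⟩, fun h => hx0 (congrArg Subtype.val h)⟩)
        (fun x y => -(killingForm ℝ g1 x y))
        (by intro x y z; simp only [Submodule.coe_add, map_add, LinearMap.add_apply]; ring)
        (by intro r x y
            simp only [SetLike.val_smul, map_smul, LinearMap.smul_apply, smul_eq_mul]; ring)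
        (by intro x y; exact neg_inj.2 (Bsymm (x : g1) (y : g1)))
        (by intro x hx
            have hxne : (x : g1) ≠ 0 := fun h => hx (Subtype.ext h)
            exact neg_pos.2 (hB1neg _ hxne))
        (T.restrict hTrestrict)
        (by intro x y
            exact neg_inj.2 (hTs _ x.2 _ y.2))
    have hTvt : T (vt : g1) = t • (vt : g1) := congrArg Subtype.val hvteq
    have hvtne : (vt : g1) ≠ 0 := fun h => hvt0 (Subtype.ext h)
    set Wt : Submodule ℝ g1 := p1 ⊓ LinearMap.ker (T - t • LinearMap.id) with hWt_def
    have hWtmem : ∀ P : g1, P ∈ Wt ↔ P ∈ p1 ∧ T P = t • P := by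
      intro P
      rw [hWt_def, Submodule.mem_inf, LinearMap.mem_ker, LinearMap.sub_apply,
        LinearMap.smul_apply, LinearMap.id_apply, sub_eq_zero]
    have hWtle : Wt ≤ p1 := inf_le_left
    have hWtinv : ∀ Z ∈ k, ∀ P ∈ Wt, ⁅Z, P⁆ ∈ Wt := by
      intro Z hZ P hP
      obtain ⟨hP1, hP2⟩ := (hWtmem P).1 hP
      rw [hWtmem]
      exact ⟨hkp1 Z hZ P hP1, by rw [hTe Z hZ P hP1, hP2, lie_smul]⟩
    rcases hp1irr Wt hWtle hWtinv with hWt | hWt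
    · exfalso
      have : (vt : g1) ∈ Wt := (hWtmem _).2 ⟨vt.2, hTvt⟩
      rw [hWt] at this
      exact hvtne this
    · refine ⟨t, fun P hP => ?_⟩
      have : P ∈ Wt := by rw [hWt]; exact hP
      exact ((hWtmem P).1 this).2
  obtain ⟨xv, hT11diag⟩ := hscalar T11 (fun P hP => (hblock1 P hP).1)
    (fun W hW P hP => (hTe1 W hW P hP).1) hT11sym
  obtain ⟨yv, hT22diag⟩ := hscalar T22 (fun Q hQ => (hblock2 Q hQ).2)
    (fun W hW Q hQ => (hTe2 W hW Q hQ).2) hT22sym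
  -- positivity of xv and yv
  obtain ⟨P0, hP0, hP0ne⟩ := hp1nz
  have hxvpos : 0 < xv := by
    have hXne : ((P0, 0) : g1 × g1) ≠ 0 := fun h => hP0ne (congrArg Prod.fst h)
    have h := hApos (P0, 0) (hsub1 (hm1m P0 hP0)) hXne
    simp only [← hT11a, ← hT21a, hT11diag P0 hP0, map_zero, map_smul,
      LinearMap.smul_apply, smul_eq_mul] at h
    have hB0 := hB1neg P0 hP0ne
    nlinarith
  have hyvpos : 0 < yv := by
    have hXne : ((0, P0) : g1 × g1) ≠ 0 := fun h => hP0ne (congrArg Prod.snd h)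
    have h := hApos ((0 : g1), P0) (hsub2 (hm2m P0 hP0)) hXne
    simp only [← hT12a, ← hT22a, hT22diag P0 hP0, map_zero, map_smul,
      LinearMap.smul_apply, smul_eq_mul, LinearMap.zero_apply] at h
    have hB0 := hB1neg P0 hP0ne
    nlinarith
  -- the geodesic orbit condition kills the off-diagonal blocks
  have hbr : ∀ W ∈ k, ∀ Q ∈ p1, ⁅W, T12 Q⁆ = 0 := by
    intro W hW Q hQ
    set R : g1 := T12 Q with hR_def
    have hR : R ∈ p1 := (hblock2 Q hQ).1
    set P : g1 := -⁅W, R⁆ with hP_def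
    have hPmem : P ∈ p1 := p1.neg_mem (hkp1 W hW R hR)
    have hXm : ((P, Q) : g1 × g1) ∈ m := by
      have : ((P, Q) : g1 × g1) = (P, 0) + (0, Q) := by simp
      rw [this]
      exact m.add_mem (hsub1 (hm1m P hPmem)) (hsub2 (hm2m Q hQ))
    have hAX1 : (A (P, Q)).1 = xv • P + R := by
      have : ((P, Q) : g1 × g1) = (P, 0) + (0, Q) := by simp
      rw [this, map_add]
      show (A (P, 0)).1 + (A (0, Q)).1 = xv • P + R
      rw [← hT11a, ← hT12a, hT11diag P hPmem, hR_def]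
    obtain ⟨Z, hZ, h1, _⟩ := hGO (P, Q) hXm
    rw [hAX1] at h1
    have hexp : ⁅P, R⁆ = -(xv • ⁅Z, P⁆) - ⁅Z, R⁆ := by
      have h1' : ⁅Z, xv • P⁆ + ⁅Z, R⁆ + (⁅P, xv • P⁆ + ⁅P, R⁆) = 0 := by
        rw [← lie_add, ← lie_add, ← add_lie]
        exact h1
      have hPP : ⁅P, xv • P⁆ = 0 := by rw [lie_smul, lie_self, smul_zero]
      have hZx : ⁅Z, xv • P⁆ = xv • ⁅Z, P⁆ := lie_smul xv Z P
      rw [hPP, hZx, zero_add] at h1'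
      first
      | (rw [eq_neg_of_add_eq_zero_right h1']; abel)
      | (rw [eq_neg_of_add_eq_zero_left h1']; abel)
    have hB1 : killingForm ℝ g1 ⁅P, R⁆ W = 0 := by
      rw [hexp]
      have e1 : killingForm ℝ g1 ⁅Z, P⁆ W = 0 := (hp1 _).1 (hkp1 Z hZ P hPmem) W hW
      have e2 : killingForm ℝ g1 ⁅Z, R⁆ W = 0 := (hp1 _).1 (hkp1 Z hZ R hR) W hW
      simp only [map_sub, map_neg, map_smul, LinearMap.sub_apply, LinearMap.neg_apply,
        LinearMap.smul_apply, smul_eq_mul, e1, e2]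
      ring
    have hB2 : killingForm ℝ g1 ⁅P, R⁆ W = killingForm ℝ g1 P P := by
      rw [Binv P R W]
      congr 1
      rw [hP_def, ← lie_skew]
    rw [hB2] at hB1
    have : P = 0 := Bzero P hB1
    rw [hP_def] at this
    exact neg_eq_zero.1 this
  have hT12z : ∀ Q ∈ p1, T12 Q = 0 := by
    set Wim : Submodule ℝ g1 := Submodule.map T12 p1 with hWim_def
    have hWle : Wim ≤ p1 := by
      rintro _ ⟨q, hq, rfl⟩
      exact (hblock2 q hq).1
    have hWinv : ∀ Z ∈ k, ∀ P ∈ Wim, ⁅Z, P⁆ ∈ Wim := by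
      rintro Z hZ _ ⟨q, hq, rfl⟩
      exact ⟨⁅Z, q⁆, hkp1 Z hZ q hq, (hTe2 Z hZ q hq).1⟩
    rcases hp1irr Wim hWle hWinv with hW | hW
    · intro Q hQ
      have : T12 Q ∈ Wim := ⟨Q, hQ, rfl⟩
      rw [hW] at this
      exact this
    · exfalso
      have hallz : ∀ W ∈ k, ∀ P ∈ p1, ⁅W, P⁆ = 0 := by
        intro W hW' P hP
        have : P ∈ Wim := by rw [hW]; exact hP
        obtain ⟨q, hq, rfl⟩ := this
        exact hbr W hW' q hq
      -- p1 is one-dimensional and central: contradiction with semisimplicity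
      have hspan : p1 = Submodule.span ℝ {P0} := by
        rcases hp1irr (Submodule.span ℝ {P0})
            (Submodule.span_le.2 (Set.singleton_subset_iff.2 hP0))
            (by intro Z hZ P hPs
                have hPp1 : P ∈ p1 :=
                  Submodule.span_le.2 (Set.singleton_subset_iff.2 hP0) hPs
                rw [hallz Z hZ P hPp1]
                exact Submodule.zero_mem _) with hsp | hsp
        · exfalso
          have : P0 ∈ Submodule.span ℝ ({P0} : Set g1) := Submodule.mem_span_singleton_self P0
          rw [hsp] at this
          exact hP0ne this
        · exact hsp.symm
      have hcenter : P0 ∈ LieAlgebra.center ℝ g1 := by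
        rw [LieModule.mem_maxTrivSubmodule]
        intro x
        have hx : x = prK x + (x - prK x) := by abel
        rw [hx, add_lie]
        have h1 : ⁅prK x, P0⁆ = 0 := hallz _ (prK_memk x) P0 hP0
        have h2 : ⁅x - prK x, P0⁆ = 0 := by
          have := prP_mem x
          rw [hspan] at this
          obtain ⟨c, hc⟩ := Submodule.mem_span_singleton.1 this
          rw [← hc, smul_lie, lie_self, smul_zero]
        rw [h1, h2, add_zero]
      rw [LieAlgebra.center_eq_bot ℝ g1] at hcenter
      exact hP0ne (by simpa using hcenter)
  have hT21z : ∀ P ∈ p1, T21 P = 0 := by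
    intro P hP
    apply Bzero
    have h := hadj P hP (T21 P) ((hblock1 P hP).2)
    rw [hT12z _ ((hblock1 P hP).2), map_zero] at h
    exact h
  -- assemble the result
  refine ⟨c0, xv, yv, hc0pos, hxvpos, hyvpos, ?_, ?_, ?_⟩
  · intro X hX
    obtain ⟨Z, hZ, rfl⟩ := (hm0 X).1 hX
    rw [hAZ Z hZ, hfc0 Z hZ]
    ext
    · simp
    · simp
  · intro X hX
    obtain ⟨h1, h2⟩ := (hm1 X).1 hX
    have hX' : X = (X.1, 0) := by
      ext
      · rfl
      · exact h2
    rw [hX']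
    have : A (X.1, (0 : g1)) = (T11 X.1, T21 X.1) := rfl
    rw [this, hT11diag X.1 h1, hT21z X.1 h1]
    ext
    · simp
    · simp
  · intro X hX
    obtain ⟨h1, h2⟩ := (hm2 X).1 hX
    have hX' : X = (0, X.2) := by
      ext
      · exact h1
      · rfl
    rw [hX']
    have : A ((0 : g1), X.2) = (T12 X.2, T22 X.2) := rfl
    rw [this, hT22diag X.2 h2, hT12z X.2 h2]
    ext
    · simp
    · simp
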